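/- arXiv:1106.3885 — 3 statements merged into one kernel-verified Lean document; each statement's English description precedes it below -/
import Mathlib

section
/- For k ∈ {1,2}, let μ_k ∈ ℝ, π_k ∈ (0,1), c_k > 0, and let ψ_k be a probability density on [-1,1] with characteristic transform ψ̂_k(t) = ∫_{-1}^1 e^{itu} ψ_k(u) du. Suppose that for every t ∈ ℝ: exp(itμ₁) ( π₁ + (1-π₁) ψ̂₁(c₁ t) ) = exp(itμ₂) ( π₂ + (1-π₂) ψ̂₂(c₂ t) ). Then π₁ = π₂ and μ₁ = μ₂. -/
open MeasureTheory Set Filter Real Complex Topology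
open scoped FourierTransform

/-- The characteristic transform of a density supported on `[-1,1]`:
`ψ̂(t) = ∫_{-1}^1 e^{itu} ψ(u) du`. -/
noncomputable def charTransformIcc (ψ : ℝ → ℝ) (t : ℝ) : ℂ :=
  ∫ u in Icc (-1 : ℝ) 1, Complex.exp (Complex.I * t * u) * (ψ u : ℂ)

lemma charTransformIcc_tendsto (ψ : ℝ → ℝ) (hm : Measurable ψ)
    (hsupp : ∀ u, u ∉ Icc (-1 : ℝ) 1 → ψ u = 0)
    (hint : ∫ u in Icc (-1 : ℝ) 1, ψ u = 1) :
    Tendsto (charTransformIcc ψ) (cocompact ℝ) (𝓝 0) := by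
  -- integrability of ψ on Icc
  have hIOn : IntegrableOn ψ (Icc (-1 : ℝ) 1) := by
    by_contra h
    rw [integral_undef h] at hint
    norm_num at hint
  have hInt : Integrable ψ := by
    have : ψ = (Icc (-1 : ℝ) 1).indicator ψ := by
      ext u
      by_cases hu : u ∈ Icc (-1 : ℝ) 1
      · simp [hu]
      · simp [hu, hsupp u hu]
    rw [this]
    exact (integrable_indicator_iff measurableSet_Icc).2 hIOn
  set f : ℝ → ℂ := fun u => (ψ u : ℂ) with hf
  have hfInt : Integrable f := hInt.ofReal
  have hRL := Real.tendsto_integral_exp_smul_cocompact f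
  have hmap : Tendsto (fun t : ℝ => -(t / (2 * π))) (cocompact ℝ) (cocompact ℝ) := by
    have : (fun t : ℝ => -(t / (2 * π))) = fun t => (-(2 * π))⁻¹ * t := by
      funext t; field_simp
    rw [this]
    have ha : (-(2 * π))⁻¹ ≠ 0 := inv_ne_zero (neg_ne_zero.2 (by positivity))
    exact (Homeomorph.mulLeft₀ _ ha).toCocompactMap.cocompact_tendsto'
  have hcomp := hRL.comp hmap
  have hkey : charTransformIcc ψ = fun t => ∫ v : ℝ, 𝐞 (-(v * (-(t / (2 * π))))) • f v := by
    funext t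
    rw [charTransformIcc,
      setIntegral_eq_integral_of_forall_compl_eq_zero (fun u hu => by simp [hf, hsupp u hu])]
    congr 1
    funext v
    rw [Circle.smul_def, Real.fourierChar_apply]
    congr 2
    push_cast
    have : (2 * (π : ℂ)) ≠ 0 := by
      simp [Complex.ofReal_ne_zero, Real.pi_ne_zero]
    field_simp
  rw [hkey]
  exact hcomp

theorem stmt7
    (μ₁ μ₂ π₁ π₂ c₁ c₂ : ℝ) (ψ₁ ψ₂ : ℝ → ℝ)
    (hπ₁ : π₁ ∈ Ioo (0 : ℝ) 1) (hπ₂ : π₂ ∈ Ioo (0 : ℝ) 1)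
    (hc₁ : 0 < c₁) (hc₂ : 0 < c₂)
    (hψ₁m : Measurable ψ₁) (hψ₁nn : ∀ u, 0 ≤ ψ₁ u)
    (hψ₁supp : ∀ u, u ∉ Icc (-1 : ℝ) 1 → ψ₁ u = 0)
    (hψ₁int : ∫ u in Icc (-1 : ℝ) 1, ψ₁ u = 1)
    (hψ₂m : Measurable ψ₂) (hψ₂nn : ∀ u, 0 ≤ ψ₂ u)
    (hψ₂supp : ∀ u, u ∉ Icc (-1 : ℝ) 1 → ψ₂ u = 0)
    (hψ₂int : ∫ u in Icc (-1 : ℝ) 1, ψ₂ u = 1)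
    (heq : ∀ t : ℝ,
      Complex.exp (Complex.I * t * μ₁) *
          ((π₁ : ℂ) + (1 - π₁ : ℝ) * charTransformIcc ψ₁ (c₁ * t)) =
        Complex.exp (Complex.I * t * μ₂) *
          ((π₂ : ℂ) + (1 - π₂ : ℝ) * charTransformIcc ψ₂ (c₂ * t))) :
    π₁ = π₂ ∧ μ₁ = μ₂ := by
  have hmul₁ : Tendsto (fun t : ℝ => c₁ * t) (cocompact ℝ) (cocompact ℝ) :=
    (Homeomorph.mulLeft₀ c₁ hc₁.ne').toCocompactMap.cocompact_tendsto'
  have hmul₂ : Tendsto (fun t : ℝ => c₂ * t) (cocompact ℝ) (cocompact ℝ) :=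
    (Homeomorph.mulLeft₀ c₂ hc₂.ne').toCocompactMap.cocompact_tendsto'
  set A₁ : ℝ → ℂ := fun t => (π₁ : ℂ) + (1 - π₁ : ℝ) * charTransformIcc ψ₁ (c₁ * t) with hA₁def
  set A₂ : ℝ → ℂ := fun t => (π₂ : ℂ) + (1 - π₂ : ℝ) * charTransformIcc ψ₂ (c₂ * t) with hA₂def
  have hA₁ : Tendsto A₁ (cocompact ℝ) (𝓝 (π₁ : ℂ)) := by
    have := ((charTransformIcc_tendsto ψ₁ hψ₁m hψ₁supp hψ₁int).comp hmul₁).const_mul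
      ((1 - π₁ : ℝ) : ℂ)
    rw [hA₁def]
    simpa [Function.comp] using (tendsto_const_nhds (x := (π₁ : ℂ))).add this
  have hA₂ : Tendsto A₂ (cocompact ℝ) (𝓝 (π₂ : ℂ)) := by
    have := ((charTransformIcc_tendsto ψ₂ hψ₂m hψ₂supp hψ₂int).comp hmul₂).const_mul
      ((1 - π₂ : ℝ) : ℂ)
    rw [hA₂def]
    simpa [Function.comp] using (tendsto_const_nhds (x := (π₂ : ℂ))).add this
  have hnorm : ∀ t : ℝ, ‖A₁ t‖ = ‖A₂ t‖ := by
    intro t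
    have h := congrArg norm (heq t)
    have e₁ : ‖Complex.exp (Complex.I * t * μ₁)‖ = 1 := by
      simp [Complex.norm_exp]
    have e₂ : ‖Complex.exp (Complex.I * t * μ₂)‖ = 1 := by
      simp [Complex.norm_exp]
    rwa [norm_mul, norm_mul, e₁, e₂, one_mul, one_mul] at h
  have hππ : π₁ = π₂ := by
    have h1 : Tendsto (fun t => ‖A₁ t‖) (cocompact ℝ) (𝓝 ‖(π₁ : ℂ)‖) := hA₁.norm
    have h2 : Tendsto (fun t => ‖A₁ t‖) (cocompact ℝ) (𝓝 ‖(π₂ : ℂ)‖) := by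
      rw [show (fun t => ‖A₁ t‖) = fun t => ‖A₂ t‖ from funext hnorm]
      exact hA₂.norm
    have := tendsto_nhds_unique h1 h2
    rwa [Complex.norm_real, Complex.norm_real, Real.norm_eq_abs, Real.norm_eq_abs,
      abs_of_pos hπ₁.1, abs_of_pos hπ₂.1] at this
  refine ⟨hππ, ?_⟩
  by_contra hμ
  set δ : ℝ := μ₁ - μ₂ with hδdef
  have hδ : δ ≠ 0 := sub_ne_zero.2 hμ
  -- key relation: exp(I t δ) * A₁ t = A₂ t
  have hrel : ∀ t : ℝ, Complex.exp (Complex.I * t * δ) * A₁ t = A₂ t := by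
    intro t
    have hne : Complex.exp (Complex.I * t * μ₂) ≠ 0 := Complex.exp_ne_zero _
    have hsplit : Complex.exp (Complex.I * t * μ₁)
        = Complex.exp (Complex.I * t * δ) * Complex.exp (Complex.I * t * μ₂) := by
      rw [← Complex.exp_add]; congr 1; push_cast [hδdef]; ring
    have h := heq t
    rw [hsplit] at h
    refine mul_left_cancel₀ hne ?_
    rw [hA₁def, hA₂def]
    linear_combination h
  -- sequence t n with exp(I t n δ) = -1
  set tseq : ℕ → ℝ := fun n => (2 * n + 1) * π / δ with htseq
  have hexp : ∀ n : ℕ, Complex.exp (Complex.I * (tseq n) * δ) = -1 := by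
    intro n
    have : (Complex.I * (tseq n) * δ : ℂ) = (n : ℤ) * (2 * π * Complex.I) + π * Complex.I := by
      rw [htseq]
      push_cast
      have : (δ : ℂ) ≠ 0 := by exact_mod_cast Complex.ofReal_ne_zero.2 hδ
      field_simp
    rw [this, Complex.exp_add, Complex.exp_int_mul_two_pi_mul_I, Complex.exp_pi_mul_I]
    ring
  have htt : Tendsto tseq atTop (cocompact ℝ) := by
    rw [cocompact_eq_atBot_atTop]
    have hbase : Tendsto (fun n : ℕ => (n : ℝ)) atTop atTop := tendsto_natCast_atTop_atTop
    have hform : tseq = fun n : ℕ => (n : ℝ) * (2 * π / δ) + π / δ := by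
      funext n; rw [htseq]; field_simp
    rcases lt_or_gt_of_ne hδ with hneg | hpos
    · have ha : 2 * π / δ < 0 := div_neg_of_pos_of_neg (by positivity) hneg
      have : Tendsto tseq atTop atBot := by
        rw [hform]
        exact tendsto_atBot_add_const_right _ _ (hbase.atTop_mul_const_of_neg ha)
      exact this.mono_right le_sup_left
    · have ha : 0 < 2 * π / δ := div_pos (by positivity) hpos
      have : Tendsto tseq atTop atTop := by
        rw [hform]
        exact tendsto_atTop_add_const_right _ _ (hbase.atTop_mul_const ha)
      exact this.mono_right le_sup_right
  have hlim1 : Tendsto (fun n => A₂ (tseq n)) atTop (𝓝 (π₂ : ℂ)) := hA₂.comp htt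
  have hlim2 : Tendsto (fun n => A₂ (tseq n)) atTop (𝓝 (-(π₁ : ℂ))) := by
    have : (fun n => A₂ (tseq n)) = fun n => -A₁ (tseq n) := by
      funext n
      rw [← hrel (tseq n), hexp n]
      ring
    rw [this]
    exact (hA₁.comp htt).neg
  have hcontr := tendsto_nhds_unique hlim1 hlim2
  have : π₂ = -π₁ := by exact_mod_cast hcontr
  linarith [hπ₁.1, hπ₂.1]
end

section
/- For k ∈ {1,2}, let μ_k ∈ ℝ, σ_k > 0, π_k ∈ (0,1), c_k > 0, and let ψ_k be a probability density on [-1,1] with characteristic transform ψ̂_k(t) = ∫_{-1}^1 e^{itu} ψ_k(u) du. Suppose that for every t ∈ ℝ: exp(itμ₁) exp(-σ₁²t²/2) ( π₁ + (1-π₁) ψ̂₁(c₁ t) ) = exp(itμ₂) exp(-σ₂²t²/2) ( π₂ + (1-π₂) ψ̂₂(c₂ t) ). Then σ₁ = σ₂. -/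
open MeasureTheory Set Filter Real

lemma rl_aux (ψ : ℝ → ℝ)
    (hψsupp : ∀ u, u ∉ Icc (-1 : ℝ) 1 → ψ u = 0)
    (hψint : ∫ u in Icc (-1 : ℝ) 1, ψ u = 1) (c : ℝ) (hc : 0 < c) :
    Tendsto (fun t => charTransformIcc ψ (c * t)) atTop (nhds 0) := by
  have hsupp : Function.support ψ ⊆ Icc (-1 : ℝ) 1 := by
    intro u hu
    by_contra h
    exact hu (hψsupp u h)
  have hIntOn : IntegrableOn ψ (Icc (-1 : ℝ) 1) := by
    by_contra h
    rw [integral_undef h] at hψint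
    norm_num at hψint
  have hInt : Integrable ψ := (integrableOn_iff_integrable_of_support_subset hsupp).mp hIntOn
  have hIntC : Integrable (fun u => (ψ u : ℂ)) := hInt.ofReal
  have hchar : ∀ s : ℝ, charTransformIcc ψ s
      = ∫ v : ℝ, Real.fourierChar (-(v * (-s / (2 * π)))) • (ψ v : ℂ) := by
    intro s
    rw [charTransformIcc,
      setIntegral_eq_integral_of_forall_compl_eq_zero (fun u hu => by
        simp [hψsupp u hu])]
    congr 1
    ext v
    rw [Circle.smul_def, Real.fourierChar_apply]
    have h2 : (2 * π * (-(v * (-s / (2 * π)))) : ℝ) = s * v := by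
      field_simp
    rw [h2]
    push_cast
    rw [smul_eq_mul]
    ring_nf
  have hmap : Tendsto (fun t : ℝ => -(c * t) / (2 * π)) atTop (Filter.cocompact ℝ) := by
    rw [cocompact_eq_atBot_atTop]
    apply Tendsto.mono_right _ le_sup_left
    have h1 : Tendsto (fun t : ℝ => c * t / (2 * π)) atTop atTop :=
      Tendsto.atTop_div_const (by positivity)
        ((tendsto_const_mul_atTop_of_pos hc).mpr tendsto_id)
    have := tendsto_neg_atTop_atBot.comp h1
    refine this.congr fun t => ?_
    simp [Function.comp, neg_div]
  have := (Real.tendsto_integral_exp_smul_cocompact (fun u => (ψ u : ℂ))).comp hmap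
  refine this.congr fun t => ?_
  simp only [Function.comp]
  exact (hchar (c * t)).symm

lemma norm_char_le (ψ : ℝ → ℝ) (hψnn : ∀ u, 0 ≤ ψ u)
    (hψint : ∫ u in Icc (-1 : ℝ) 1, ψ u = 1) (t : ℝ) :
    ‖charTransformIcc ψ t‖ ≤ 1 := by
  calc ‖charTransformIcc ψ t‖
      ≤ ∫ u in Icc (-1 : ℝ) 1, ‖Complex.exp (Complex.I * t * u) * (ψ u : ℂ)‖ :=
        norm_integral_le_integral_norm _
    _ = ∫ u in Icc (-1 : ℝ) 1, ψ u := by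
        refine integral_congr_ae (Filter.Eventually.of_forall fun u => ?_)
        show ‖Complex.exp (Complex.I * t * u) * (ψ u : ℂ)‖ = ψ u
        rw [norm_mul, Complex.norm_exp,
          Complex.norm_real, Real.norm_eq_abs, abs_of_nonneg (hψnn u)]
        simp [Complex.mul_re]
    _ = 1 := hψint

lemma bracket_le_one (ψ : ℝ → ℝ) (hψnn : ∀ u, 0 ≤ ψ u)
    (hψint : ∫ u in Icc (-1 : ℝ) 1, ψ u = 1) (p : ℝ) (hp : p ∈ Ioo (0 : ℝ) 1) (t : ℝ) :
    ‖(p : ℂ) + ((1 - p : ℝ) : ℂ) * charTransformIcc ψ t‖ ≤ 1 := by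
  have h1 := norm_char_le ψ hψnn hψint t
  calc ‖(p : ℂ) + ((1 - p : ℝ) : ℂ) * charTransformIcc ψ t‖
      ≤ ‖(p : ℂ)‖ + ‖((1 - p : ℝ) : ℂ) * charTransformIcc ψ t‖ := norm_add_le _ _
    _ = p + (1 - p) * ‖charTransformIcc ψ t‖ := by
        rw [norm_mul, Complex.norm_real, Complex.norm_real, Real.norm_eq_abs,
          Real.norm_eq_abs, abs_of_pos hp.1, abs_of_nonneg (by linarith [hp.2] : (0:ℝ) ≤ 1 - p)]
    _ ≤ p + (1 - p) * 1 := by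
        have : (0:ℝ) ≤ 1 - p := by linarith [hp.2]
        nlinarith
    _ = 1 := by ring

lemma key_le (σ₁ σ₂ p c : ℝ) (ψ : ℝ → ℝ)
    (hσ₁ : 0 ≤ σ₁) (hσ₂ : 0 ≤ σ₂) (hp : p ∈ Ioo (0 : ℝ) 1) (hc : 0 < c)
    (hψsupp : ∀ u, u ∉ Icc (-1 : ℝ) 1 → ψ u = 0)
    (hψint : ∫ u in Icc (-1 : ℝ) 1, ψ u = 1)
    (N : ℝ → ℝ) (hN : ∀ t, N t ≤ 1)
    (hEq : ∀ t, Real.exp (-(σ₁ ^ 2 * t ^ 2) / 2) * N t =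
      Real.exp (-(σ₂ ^ 2 * t ^ 2) / 2) *
        ‖(p : ℂ) + ((1 - p : ℝ) : ℂ) * charTransformIcc ψ (c * t)‖) :
    σ₁ ≤ σ₂ := by
  by_contra hlt
  push_neg at hlt
  have hΔ : 0 < σ₁ ^ 2 - σ₂ ^ 2 := by nlinarith
  set Δ : ℝ := σ₁ ^ 2 - σ₂ ^ 2 with hΔdef
  have hRL := (rl_aux ψ hψsupp hψint c hc).norm
  simp only [norm_zero] at hRL
  have h2 : ∀ᶠ t in atTop, ‖charTransformIcc ψ (c * t)‖ < p / 2 :=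
    hRL.eventually_lt_const (by linarith [hp.1])
  have hexp : Tendsto (fun t : ℝ => Real.exp (-(Δ * t ^ 2) / 2)) atTop (nhds 0) := by
    apply Real.tendsto_exp_atBot.comp
    apply Tendsto.atBot_div_const (by norm_num : (0:ℝ) < 2)
    apply tendsto_neg_atTop_atBot.comp
    exact (tendsto_const_mul_atTop_of_pos hΔ).mpr (tendsto_pow_atTop (by norm_num) |>.comp tendsto_id)
  have h3 : ∀ᶠ t in atTop, Real.exp (-(Δ * t ^ 2) / 2) < p / 2 :=
    hexp.eventually_lt_const (by linarith [hp.1])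
  obtain ⟨t, ht2, ht3⟩ := (h2.and h3).exists
  -- derive contradiction
  set z : ℂ := ((1 - p : ℝ) : ℂ) * charTransformIcc ψ (c * t) with hz
  have hzn : ‖z‖ ≤ ‖charTransformIcc ψ (c * t)‖ := by
    rw [hz, norm_mul, Complex.norm_real, Real.norm_eq_abs,
      abs_of_nonneg (by linarith [hp.2] : (0:ℝ) ≤ 1 - p)]
    exact mul_le_of_le_one_left (norm_nonneg _) (by linarith [hp.1])
  have hlow : p - ‖charTransformIcc ψ (c * t)‖ ≤ ‖(p : ℂ) + z‖ := by
    have h4 : ‖(p : ℂ)‖ ≤ ‖(p : ℂ) + z‖ + ‖z‖ := by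
      calc ‖(p : ℂ)‖ = ‖((p : ℂ) + z) + (-z)‖ := by ring_nf
        _ ≤ ‖(p : ℂ) + z‖ + ‖-z‖ := norm_add_le _ _
        _ = ‖(p : ℂ) + z‖ + ‖z‖ := by rw [norm_neg]
    have h5 : ‖(p : ℂ)‖ = p := by
      rw [Complex.norm_real, Real.norm_eq_abs, abs_of_pos hp.1]
    linarith
  have hexp1 : (0:ℝ) < Real.exp (-(σ₂ ^ 2 * t ^ 2) / 2) := Real.exp_pos _
  have hfac : Real.exp (-(σ₁ ^ 2 * t ^ 2) / 2)
      = Real.exp (-(σ₂ ^ 2 * t ^ 2) / 2) * Real.exp (-(Δ * t ^ 2) / 2) := by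
    rw [← Real.exp_add]
    congr 1
    rw [hΔdef]
    ring
  have hEqt := hEq t
  have hle : Real.exp (-(σ₂ ^ 2 * t ^ 2) / 2) * ‖(p : ℂ) + z‖
      ≤ Real.exp (-(σ₂ ^ 2 * t ^ 2) / 2) * Real.exp (-(Δ * t ^ 2) / 2) := by
    rw [← hfac, ← hEqt]
    have := hN t
    nlinarith [Real.exp_pos (-(σ₁ ^ 2 * t ^ 2) / 2)]
  have hle2 : ‖(p : ℂ) + z‖ ≤ Real.exp (-(Δ * t ^ 2) / 2) :=
    le_of_mul_le_mul_left (by linarith [hle]) hexp1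
  linarith

theorem stmt8
    (μ₁ μ₂ σ₁ σ₂ π₁ π₂ c₁ c₂ : ℝ) (ψ₁ ψ₂ : ℝ → ℝ)
    (hσ₁ : 0 < σ₁) (hσ₂ : 0 < σ₂)
    (hπ₁ : π₁ ∈ Ioo (0 : ℝ) 1) (hπ₂ : π₂ ∈ Ioo (0 : ℝ) 1)
    (hc₁ : 0 < c₁) (hc₂ : 0 < c₂)
    (hψ₁m : Measurable ψ₁) (hψ₁nn : ∀ u, 0 ≤ ψ₁ u)
    (hψ₁supp : ∀ u, u ∉ Icc (-1 : ℝ) 1 → ψ₁ u = 0)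
    (hψ₁int : ∫ u in Icc (-1 : ℝ) 1, ψ₁ u = 1)
    (hψ₂m : Measurable ψ₂) (hψ₂nn : ∀ u, 0 ≤ ψ₂ u)
    (hψ₂supp : ∀ u, u ∉ Icc (-1 : ℝ) 1 → ψ₂ u = 0)
    (hψ₂int : ∫ u in Icc (-1 : ℝ) 1, ψ₂ u = 1)
    (heq : ∀ t : ℝ,
      Complex.exp (Complex.I * t * μ₁) * (Real.exp (-(σ₁ ^ 2 * t ^ 2) / 2) : ℂ) *
          ((π₁ : ℂ) + (1 - π₁ : ℝ) * charTransformIcc ψ₁ (c₁ * t)) =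
        Complex.exp (Complex.I * t * μ₂) * (Real.exp (-(σ₂ ^ 2 * t ^ 2) / 2) : ℂ) *
          ((π₂ : ℂ) + (1 - π₂ : ℝ) * charTransformIcc ψ₂ (c₂ * t))) :
    σ₁ = σ₂ := by
  have hnorm : ∀ t : ℝ,
      Real.exp (-(σ₁ ^ 2 * t ^ 2) / 2) *
        ‖(π₁ : ℂ) + ((1 - π₁ : ℝ) : ℂ) * charTransformIcc ψ₁ (c₁ * t)‖ =
      Real.exp (-(σ₂ ^ 2 * t ^ 2) / 2) *
        ‖(π₂ : ℂ) + ((1 - π₂ : ℝ) : ℂ) * charTransformIcc ψ₂ (c₂ * t)‖ := by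
    intro t
    have h := congrArg norm (heq t)
    rw [norm_mul, norm_mul, norm_mul, norm_mul] at h
    have e1 : ‖Complex.exp (Complex.I * t * μ₁)‖ = 1 := by
      rw [Complex.norm_exp]
      simp [Complex.mul_re]
    have e2 : ‖Complex.exp (Complex.I * t * μ₂)‖ = 1 := by
      rw [Complex.norm_exp]
      simp [Complex.mul_re]
    have e3 : ∀ r : ℝ, ‖((Real.exp r : ℝ) : ℂ)‖ = Real.exp r := fun r => by
      rw [Complex.norm_real, Real.norm_eq_abs, abs_of_pos (Real.exp_pos r)]
    rw [e1, e2, e3, e3, one_mul, one_mul] at h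
    exact h
  have h12 : σ₁ ≤ σ₂ := by
    refine key_le σ₁ σ₂ π₂ c₂ ψ₂ hσ₁.le hσ₂.le hπ₂ hc₂ hψ₂supp hψ₂int
      (fun t => ‖(π₁ : ℂ) + ((1 - π₁ : ℝ) : ℂ) * charTransformIcc ψ₁ (c₁ * t)‖)
      (fun t => bracket_le_one ψ₁ hψ₁nn hψ₁int π₁ hπ₁ (c₁ * t)) hnorm
  have h21 : σ₂ ≤ σ₁ := by
    refine key_le σ₂ σ₁ π₁ c₁ ψ₁ hσ₂.le hσ₁.le hπ₁ hc₁ hψ₁supp hψ₁int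
      (fun t => ‖(π₂ : ℂ) + ((1 - π₂ : ℝ) : ℂ) * charTransformIcc ψ₂ (c₂ * t)‖)
      (fun t => bracket_le_one ψ₂ hψ₂nn hψ₂int π₂ hπ₂ (c₂ * t)) (fun t => (hnorm t).symm)
  linarith
end

section
/- Let μ ∈ ℝ, σ > 0, τ > 0, and let ψ be a probability density on [-1,1]. Define f₀(z) = φ_{μ,σ}(z) and f₁(z) = ∫_{-1}^1 φ_{μ+τσu,σ}(z) ψ(u) du. If there exists δ ∈ (0,1] with ∫_δ^1 ψ(u) du > 0, then the ratio f₁(z)/f₀(z) tends to +∞ as z → +∞. (Symmetrically, if ∫_{-1}^{-δ} ψ(u) du > 0, then f₁(z)/f₀(z) → +∞ as z → -∞; thus the non-null density f₁ has a heavier tail than the null density f₀.) -/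
open MeasureTheory Set Filter

/-- The `N(μ, σ²)` density. -/
noncomputable def gaussDen (μ σ z : ℝ) : ℝ :=
  (Real.sqrt (2 * Real.pi * σ ^ 2))⁻¹ * Real.exp (-(z - μ) ^ 2 / (2 * σ ^ 2))

lemma gaussDen_pos (μ σ z : ℝ) (hσ : 0 < σ) : 0 < gaussDen μ σ z := by
  unfold gaussDen
  have h : 0 < 2 * Real.pi * σ ^ 2 := by positivity
  positivity

lemma gaussDen_le (μ σ z : ℝ) (hσ : 0 < σ) :
    gaussDen μ σ z ≤ (Real.sqrt (2 * Real.pi * σ ^ 2))⁻¹ := by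
  unfold gaussDen
  have h : 0 < 2 * Real.pi * σ ^ 2 := by positivity
  have h1 : Real.exp (-(z - μ) ^ 2 / (2 * σ ^ 2)) ≤ 1 := by
    rw [Real.exp_le_one_iff]
    apply div_nonpos_of_nonpos_of_nonneg
    · nlinarith [sq_nonneg (z - μ)]
    · positivity
  calc (Real.sqrt (2 * Real.pi * σ ^ 2))⁻¹ * Real.exp (-(z - μ) ^ 2 / (2 * σ ^ 2))
      ≤ (Real.sqrt (2 * Real.pi * σ ^ 2))⁻¹ * 1 := by
        apply mul_le_mul_of_nonneg_left h1
        positivity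
    _ = _ := mul_one _

lemma key (μ σ τ δ ε : ℝ) (hσ : 0 < σ) (hτ : 0 < τ) (hδ : 0 < δ)
    (hε : ε ^ 2 = 1) (ψ : ℝ → ℝ) (hψm : Measurable ψ) (hψnn : ∀ u, 0 ≤ ψ u)
    (hψInt : IntegrableOn ψ (Icc (-1:ℝ) 1))
    (S : Set ℝ) (hSm : MeasurableSet S) (hS : S ⊆ Icc (-1:ℝ) 1)
    (hSb : ∀ u ∈ S, δ ≤ ε * u)
    (z : ℝ) (hz : 0 ≤ ε * (z - μ)) :
    (∫ u in S, ψ u) * Real.exp (τ * δ * (ε * (z - μ)) / σ - τ ^ 2 / 2) ≤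
      (∫ u in Icc (-1:ℝ) 1, gaussDen (μ + τ * σ * u) σ z * ψ u) / gaussDen μ σ z := by
  set g : ℝ := gaussDen μ σ z with hgdef
  set E : ℝ := Real.exp (τ * δ * (ε * (z - μ)) / σ - τ ^ 2 / 2) with hEdef
  have hg : 0 < g := gaussDen_pos μ σ z hσ
  have hE : 0 < E := Real.exp_pos _
  -- pointwise lower bound on S
  have hpt : ∀ u ∈ S, g * E * ψ u ≤ gaussDen (μ + τ * σ * u) σ z * ψ u := by
    intro u hu
    apply mul_le_mul_of_nonneg_right _ (hψnn u)
    have hu2 : u ^ 2 ≤ 1 := by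
      have := hS hu
      simp only [mem_Icc] at this
      nlinarith
    have hb := hSb u hu
    rw [hgdef, hEdef]
    unfold gaussDen
    rw [mul_assoc, ← Real.exp_add]
    have hC : (0:ℝ) ≤ (Real.sqrt (2 * Real.pi * σ ^ 2))⁻¹ := by positivity
    apply mul_le_mul_of_nonneg_left _ hC
    apply Real.exp_le_exp.2
    have h2 : (0:ℝ) < 2 * σ ^ 2 := by positivity
    have key1 : 0 ≤ (ε * u - δ) * (ε * (z - μ)) := mul_nonneg (by linarith) hz
    have key2 : u * (z - μ) = (ε * u) * (ε * (z - μ)) := by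
      linear_combination (-(u * (z - μ))) * hε
    have hσ' : σ ≠ 0 := hσ.ne'
    have e1 : τ * δ * (ε * (z - μ)) / σ - τ ^ 2 / 2
        = (2 * σ * (τ * δ * (ε * (z - μ))) - τ ^ 2 * σ ^ 2) / (2 * σ ^ 2) := by
      field_simp
    rw [e1, ← add_div, div_le_div_iff₀ h2 h2]
    have main : 2 * σ * (τ * δ * (ε * (z - μ))) - τ ^ 2 * σ ^ 2
        ≤ 2 * τ * σ * (u * (z - μ)) - τ ^ 2 * σ ^ 2 * u ^ 2 := by
      rw [key2]
      nlinarith [mul_nonneg (by positivity : (0:ℝ) ≤ 2 * τ * σ) key1,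
        mul_nonneg (sq_nonneg (τ * σ)) (sub_nonneg.2 hu2)]
    nlinarith [mul_le_mul_of_nonneg_right main h2.le]
  -- integrability
  set C : ℝ := (Real.sqrt (2 * Real.pi * σ ^ 2))⁻¹ with hCdef
  have hFm : Measurable fun u => gaussDen (μ + τ * σ * u) σ z * ψ u := by
    apply Measurable.mul _ hψm
    unfold gaussDen
    fun_prop
  have hInt1 : IntegrableOn (fun u => gaussDen (μ + τ * σ * u) σ z * ψ u) (Icc (-1:ℝ) 1) := by
    apply Integrable.mono' (hψInt.const_mul C) hFm.aestronglyMeasurable.restrict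
    filter_upwards with u
    rw [Real.norm_eq_abs, abs_of_nonneg (mul_nonneg (gaussDen_pos _ σ z hσ).le (hψnn u))]
    exact mul_le_mul_of_nonneg_right (gaussDen_le _ σ z hσ) (hψnn u)
  have hFnn : ∀ u, 0 ≤ gaussDen (μ + τ * σ * u) σ z * ψ u :=
    fun u => mul_nonneg (gaussDen_pos _ σ z hσ).le (hψnn u)
  have step1 : ∫ u in S, g * E * ψ u ≤ ∫ u in S, gaussDen (μ + τ * σ * u) σ z * ψ u := by
    apply setIntegral_mono_on ((hψInt.mono_set hS).const_mul (g * E)) (hInt1.mono_set hS) hSm hpt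
  have step2 : ∫ u in S, gaussDen (μ + τ * σ * u) σ z * ψ u ≤
      ∫ u in Icc (-1:ℝ) 1, gaussDen (μ + τ * σ * u) σ z * ψ u := by
    apply setIntegral_mono_set hInt1
    · filter_upwards with u using hFnn u
    · exact HasSubset.Subset.eventuallyLE hS
  have heq : ∫ u in S, g * E * ψ u = g * E * ∫ u in S, ψ u := integral_const_mul _ _
  rw [le_div_iff₀ hg]
  calc (∫ u in S, ψ u) * E * g = ∫ u in S, g * E * ψ u := by rw [heq]; ring
    _ ≤ _ := le_trans step1 step2

theorem stmt10
    (μ σ τ : ℝ) (hσ : 0 < σ) (hτ : 0 < τ) (ψ : ℝ → ℝ)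
    (hψm : Measurable ψ) (hψnn : ∀ u, 0 ≤ ψ u)
    (hψsupp : ∀ u, u ∉ Icc (-1 : ℝ) 1 → ψ u = 0)
    (hψint : ∫ u in Icc (-1 : ℝ) 1, ψ u = 1) :
    ((∃ δ, δ ∈ Ioc (0 : ℝ) 1 ∧ 0 < ∫ u in Icc δ 1, ψ u) →
      Tendsto
        (fun z => (∫ u in Icc (-1 : ℝ) 1, gaussDen (μ + τ * σ * u) σ z * ψ u) /
          gaussDen μ σ z) atTop atTop) ∧
    ((∃ δ, δ ∈ Ioc (0 : ℝ) 1 ∧ 0 < ∫ u in Icc (-1 : ℝ) (-δ), ψ u) →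
      Tendsto
        (fun z => (∫ u in Icc (-1 : ℝ) 1, gaussDen (μ + τ * σ * u) σ z * ψ u) /
          gaussDen μ σ z) atBot atTop) := by
  have hψInt : IntegrableOn ψ (Icc (-1:ℝ) 1) := by
    by_contra h
    rw [integral_undef h] at hψint
    norm_num at hψint
  have hslope : ∀ δ : ℝ, 0 < δ → 0 < τ * δ / σ := fun δ hδ => by positivity
  constructor
  · rintro ⟨δ, ⟨hδ0, hδ1⟩, hc⟩
    have hlin : Tendsto (fun z : ℝ => τ * δ * (1 * (z - μ)) / σ - τ ^ 2 / 2) atTop atTop := by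
      have h1 : Tendsto (fun z : ℝ => (τ * δ / σ) * z + (-(τ * δ / σ) * μ - τ ^ 2 / 2))
          atTop atTop :=
        tendsto_atTop_add_const_right _ _ (tendsto_id.const_mul_atTop (hslope δ hδ0))
      exact h1.congr (fun z => by ring)
    have hexp := Real.tendsto_exp_atTop.comp hlin
    apply tendsto_atTop_mono' atTop _ (hexp.const_mul_atTop hc)
    filter_upwards [eventually_ge_atTop μ] with z hz
    exact key μ σ τ δ 1 hσ hτ hδ0 (one_pow 2) ψ hψm hψnn hψInt
      (Icc δ 1) measurableSet_Icc (Icc_subset_Icc (by linarith) le_rfl)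
      (fun u hu => by rw [one_mul]; exact hu.1)
      z (by rw [one_mul]; linarith)
  · rintro ⟨δ, ⟨hδ0, hδ1⟩, hc⟩
    have hlin : Tendsto (fun z : ℝ => τ * δ * (-1 * (z - μ)) / σ - τ ^ 2 / 2) atBot atTop := by
      have h0 : Tendsto (fun z : ℝ => -z + μ) atBot atTop :=
        tendsto_atTop_add_const_right _ _ tendsto_neg_atBot_atTop
      have h1 : Tendsto (fun z : ℝ => (τ * δ / σ) * (-z + μ) - τ ^ 2 / 2) atBot atTop :=
        tendsto_atTop_add_const_right _ _ (h0.const_mul_atTop (hslope δ hδ0))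
      exact h1.congr (fun z => by ring)
    have hexp := Real.tendsto_exp_atTop.comp hlin
    apply tendsto_atTop_mono' atBot _ (hexp.const_mul_atTop hc)
    filter_upwards [eventually_le_atBot μ] with z hz
    exact key μ σ τ δ (-1) hσ hτ hδ0 (by norm_num) ψ hψm hψnn hψInt
      (Icc (-1) (-δ)) measurableSet_Icc (Icc_subset_Icc le_rfl (by linarith))
      (fun u hu => by simp only [neg_one_mul]; linarith [hu.2])
      z (by simp only [neg_one_mul]; linarith)
end
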